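/- arXiv:2202.05353 — 2 statements merged into one kernel-verified Lean document; each statement's English description precedes it below -/
import Mathlib

section
/- Let Ω be closed and convex, x ∈ Ω, g ∈ ℝⁿ. The map α ↦ ‖P_Ω(x − αg) − x‖ is nondecreasing on (0, ∞), and the map α ↦ ‖P_Ω(x − αg) − x‖/α is nonincreasing on (0, ∞). -/
open scoped RealInnerProductSpace


set_option maxHeartbeats 1000000 in
/-- The map `α ↦ ‖P_Ω(x - αg) - x‖` is nondecreasing on `(0,∞)` and
`α ↦ ‖P_Ω(x - αg) - x‖/α` is nonincreasing on `(0,∞)`. -/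
theorem proj_step_monotone (n : ℕ) (Ω : Set (EuclideanSpace ℝ (Fin n)))
    (hclosed : IsClosed Ω) (hconv : Convex ℝ Ω)
    (x : EuclideanSpace ℝ (Fin n)) (hx : x ∈ Ω)
    (g : EuclideanSpace ℝ (Fin n))
    (P : ℝ → EuclideanSpace ℝ (Fin n))
    (hP : ∀ α : ℝ, P α ∈ Ω ∧ ∀ y ∈ Ω, ‖x - α • g - P α‖ ≤ ‖x - α • g - y‖) :
    ∀ α β : ℝ, 0 < α → α ≤ β →
      ‖P α - x‖ ≤ ‖P β - x‖ ∧ ‖P β - x‖ / β ≤ ‖P α - x‖ / α := by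
  intro α β hα hαβ
  have hβ : 0 < β := lt_of_lt_of_le hα hαβ
  -- variational inequality for the projection
  have key : ∀ γ : ℝ, ∀ w ∈ Ω, (inner ℝ ((x - γ • g) - P γ) (w - P γ) : ℝ) ≤ 0 := by
    intro γ w hw
    haveI : Nonempty Ω := ⟨⟨x, hx⟩⟩
    have hbdd : BddBelow (Set.range fun w : Ω => ‖(x - γ • g) - (w : EuclideanSpace ℝ (Fin n))‖) :=
      ⟨0, by rintro b ⟨w, rfl⟩; exact norm_nonneg _⟩
    have h1 : ‖(x - γ • g) - P γ‖ = ⨅ w : Ω, ‖(x - γ • g) - (w : EuclideanSpace ℝ (Fin n))‖ := by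
      apply le_antisymm
      · exact le_ciInf fun w => (hP γ).2 w w.2
      · exact ciInf_le hbdd ⟨P γ, (hP γ).1⟩
    exact ((norm_eq_iInf_iff_real_inner_le_zero hconv (hP γ).1).1 h1) w hw
  have hA := key α (P β) (hP β).1
  have hB := key β (P α) (hP α).1
  set u := P α - x with hu
  set v := P β - x with hv
  have eA : (x - α • g) - P α = -u - α • g := by rw [hu]; abel
  have eB : (x - β • g) - P β = -v - β • g := by rw [hv]; abel
  have eAB : P β - P α = v - u := by rw [hu, hv]; abel
  have eBA : P α - P β = u - v := by rw [hu, hv]; abel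
  rw [eA, eAB] at hA
  rw [eB, eBA] at hB
  simp only [inner_sub_left, inner_sub_right, inner_neg_left, real_inner_smul_left] at hA hB
  have hcomm : (inner ℝ v u : ℝ) = inner ℝ u v := real_inner_comm u v
  have huu : (inner ℝ u u : ℝ) = ‖u‖ ^ 2 := real_inner_self_eq_norm_sq u
  have hvv : (inner ℝ v v : ℝ) = ‖v‖ ^ 2 := real_inner_self_eq_norm_sq v
  have hC : (inner ℝ u v : ℝ) ≤ ‖u‖ * ‖v‖ := real_inner_le_norm u v
  -- key inequality: (α+β) ⟪u,v⟫ ≥ β ‖u‖² + α ‖v‖²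
  have hK : β * ‖u‖ ^ 2 + α * ‖v‖ ^ 2 ≤ (α + β) * (inner ℝ u v : ℝ) := by
    nlinarith [mul_nonneg hβ.le (neg_nonneg.2 hA), mul_nonneg hα.le (neg_nonneg.2 hB)]
  have ha := norm_nonneg u
  have hb := norm_nonneg v
  have hab : β * ‖u‖ ^ 2 + α * ‖v‖ ^ 2 ≤ (α + β) * (‖u‖ * ‖v‖) :=
    le_trans hK (mul_le_mul_of_nonneg_left hC (by linarith))
  have hfact : (‖u‖ - ‖v‖) * (β * ‖u‖ - α * ‖v‖) ≤ 0 := by nlinarith [hab]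
  have h1 : ‖u‖ ≤ ‖v‖ := by
    by_contra h
    push_neg at h
    have h2 : β * ‖u‖ - α * ‖v‖ ≤ 0 := by
      by_contra h3
      push_neg at h3
      nlinarith [mul_pos (sub_pos.2 h) h3]
    have h4 : α * ‖v‖ ≤ β * ‖v‖ := mul_le_mul_of_nonneg_right hαβ hb
    have h5 : β * ‖v‖ < β * ‖u‖ := by exact mul_lt_mul_of_pos_left h hβ
    linarith
  refine ⟨h1, ?_⟩
  rw [div_le_div_iff₀ hβ hα]
  by_contra hcon
  push_neg at hcon
  have hblt : ‖u‖ < ‖v‖ := by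
    have h4 : α * ‖v‖ ≤ β * ‖v‖ := mul_le_mul_of_nonneg_right hαβ hb
    have h5 : β * ‖u‖ < β * ‖v‖ := by nlinarith
    exact lt_of_mul_lt_mul_left h5 hβ.le
  nlinarith [mul_pos (sub_pos.2 hblt) (by linarith : (0:ℝ) < ‖v‖ * α - ‖u‖ * β)]
end

section
/- Let f : ℝⁿ → ℝ be differentiable, Ω closed convex, x ∈ Ω, d = P_Ω(x − αg) − x with g = ∇f(x), α > 0, and d ≠ 0. Suppose ∇f is Lipschitz continuous with constant L. Then for δ ∈ (0,1), the Armijo condition f(x + s d) ≤ f(x) + s δ ⟨∇f(x), d⟩ holds for all s ∈ (0, min{1, 2(1−δ)/(αL)}]. -/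
set_option maxHeartbeats 800000

open scoped RealInnerProductSpace

/-- If `∇f` is `L`-Lipschitz, `d = P_Ω(x - α∇f(x)) - x ≠ 0`, and
`δ ∈ (0,1)`, then the Armijo condition holds for all stepsizes
`s ∈ (0, min{1, 2(1-δ)/(αL)}]`. -/
theorem armijo_holds (n : ℕ) (Ω : Set (EuclideanSpace ℝ (Fin n)))
    (hclosed : IsClosed Ω) (hconv : Convex ℝ Ω)
    (f : EuclideanSpace ℝ (Fin n) → ℝ) (hf : Differentiable ℝ f)
    (L : ℝ) (hLip : ∀ u v, ‖gradient f u - gradient f v‖ ≤ L * ‖u - v‖)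
    (x : EuclideanSpace ℝ (Fin n)) (hx : x ∈ Ω)
    (α : ℝ) (hα : 0 < α)
    (p : EuclideanSpace ℝ (Fin n)) (hp : p ∈ Ω)
    (hpmin : ∀ y ∈ Ω,
      ‖x - α • gradient f x - p‖ ≤ ‖x - α • gradient f x - y‖)
    (hd : p - x ≠ 0) (δ : ℝ) (hδ : δ ∈ Set.Ioo (0 : ℝ) 1) :
    ∀ s : ℝ, 0 < s → s ≤ min 1 (2 * (1 - δ) / (α * L)) →
      f (x + s • (p - x)) ≤ f x + s * δ * ⟪gradient f x, p - x⟫ := by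
  intro s hs hsle
  obtain ⟨hδ0, hδ1⟩ := hδ
  set g := gradient f x with hg
  set d := p - x with hdd
  -- L is positive, else the hypothesis on s is contradictory
  have hL : 0 < L := by
    by_contra h
    push_neg at h
    have h1 : 2 * (1 - δ) / (α * L) ≤ 0 :=
      div_nonpos_iff.mpr (Or.inl ⟨by nlinarith, by nlinarith⟩)
    linarith [hsle.trans (min_le_right 1 (2 * (1 - δ) / (α * L)))]
  -- projection variational inequality
  have hproj : ⟪x - α • g - p, x - p⟫ ≤ 0 := by
    haveI : Nonempty Ω := ⟨⟨p, hp⟩⟩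
    have hbdd : BddBelow (Set.range fun w : Ω => ‖(x - α • g) - (w : EuclideanSpace ℝ (Fin n))‖) := by
      refine ⟨0, ?_⟩
      rintro r ⟨w, rfl⟩
      exact norm_nonneg _
    have heq : ‖(x - α • g) - p‖ = ⨅ w : Ω, ‖(x - α • g) - w‖ := by
      apply le_antisymm
      · exact le_ciInf fun w => hpmin w w.2
      · exact ciInf_le hbdd ⟨p, hp⟩
    exact ((norm_eq_iInf_iff_real_inner_le_zero hconv hp).mp heq) x hx
  have hkey : ‖d‖ ^ 2 + α * ⟪g, d⟫ ≤ 0 := by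
    have h1 : x - α • g - p = (x - p) - α • g := by abel
    rw [h1, inner_sub_left, real_inner_smul_left] at hproj
    have h2 : x - p = -d := by rw [hdd]; abel
    rw [h2, inner_neg_neg, inner_neg_right, real_inner_self_eq_norm_sq] at hproj
    linarith
  -- descent lemma via monotonicity
  set C : ℝ := ⟪g, d⟫ with hC
  set K : ℝ := L * ‖d‖ ^ 2 with hK
  set φ : ℝ → ℝ := fun t => f (x + t • d) - f x - t * C - K * t ^ 2 / 2 with hφ
  have hline : ∀ t : ℝ, HasDerivAt (fun t : ℝ => x + t • d) d t := by
    intro t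
    simpa using ((hasDerivAt_id t).smul_const d).const_add x
  have hderiv : ∀ t : ℝ,
      HasDerivAt φ (⟪gradient f (x + t • d), d⟫ - C - K * t) t := by
    intro t
    have hgrad := (hf (x + t • d)).hasGradientAt
    have hcomp := (hf (x + t • d)).hasFDerivAt.comp_hasDerivAt t (hline t)
    have hfd : HasDerivAt (fun t : ℝ => f (x + t • d))
        ⟪gradient f (x + t • d), d⟫ t := by
      rw [hgrad.hasFDerivAt.fderiv, InnerProductSpace.toDual_apply_apply] at hcomp
      exact hcomp
    have h2 : HasDerivAt (fun t : ℝ => t * C) C t := by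
      simpa using (hasDerivAt_id t).mul_const C
    have h3 : HasDerivAt (fun t : ℝ => K * t ^ 2 / 2) (K * t) t := by
      have := ((hasDerivAt_pow 2 t).const_mul K).div_const 2
      simpa [mul_comm, mul_assoc, mul_div_assoc] using this
    exact ((hfd.sub_const (f x)).sub h2).sub h3
  have hmono : AntitoneOn φ (Set.Ici (0 : ℝ)) := by
    apply antitoneOn_of_deriv_nonpos (convex_Ici 0)
    · have hdiff : Differentiable ℝ φ := fun t => (hderiv t).differentiableAt
      exact hdiff.continuous.continuousOn
    · intro t _
      exact (hderiv t).differentiableAt.differentiableWithinAt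
    · intro t ht
      rw [interior_Ici] at ht
      rw [(hderiv t).deriv]
      have h1 : ⟪gradient f (x + t • d) - g, d⟫ ≤ L * t * ‖d‖ ^ 2 := by
        calc ⟪gradient f (x + t • d) - g, d⟫
            ≤ ‖gradient f (x + t • d) - g‖ * ‖d‖ := real_inner_le_norm _ _
          _ ≤ (L * ‖(x + t • d) - x‖) * ‖d‖ := by
              have := hLip (x + t • d) x
              exact mul_le_mul_of_nonneg_right this (norm_nonneg _)
          _ = L * t * ‖d‖ ^ 2 := by
              have : (x + t • d) - x = t • d := by abel
              rw [this, norm_smul, Real.norm_eq_abs, abs_of_pos ht]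
              ring
      have h2 : ⟪gradient f (x + t • d) - g, d⟫
          = ⟪gradient f (x + t • d), d⟫ - C := by
        rw [inner_sub_left, hC]
      rw [hK]
      nlinarith [norm_nonneg d]
  have hdescent : φ s ≤ φ 0 :=
    hmono (Set.self_mem_Ici) (Set.mem_Ici.mpr hs.le) hs.le
  have hφ0 : φ 0 = 0 := by simp [hφ]
  have hφs : f (x + s • d) ≤ f x + s * C + K * s ^ 2 / 2 := by
    have := hdescent
    rw [hφ0] at this
    simp only [hφ] at this
    linarith
  -- arithmetic conclusion
  have hsle2 : s ≤ 2 * (1 - δ) / (α * L) := hsle.trans (min_le_right _ _)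
  have hsαL : s * (α * L) ≤ 2 * (1 - δ) :=
    (le_div_iff₀ (by positivity)).mp hsle2
  have h1 : s * (1 - δ) * (‖d‖ ^ 2 + α * C) ≤ 0 :=
    mul_nonpos_of_nonneg_of_nonpos
      (mul_nonneg hs.le (sub_nonneg.mpr hδ1.le)) hkey
  have h2 : s * (α * L) * (s * ‖d‖ ^ 2 / 2) ≤ 2 * (1 - δ) * (s * ‖d‖ ^ 2 / 2) :=
    mul_le_mul_of_nonneg_right hsαL (by positivity)
  have h3 : α * (s * C + K * s ^ 2 / 2 - s * δ * C) ≤ 0 := by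
    rw [hK]; nlinarith [h1, h2]
  have h4 : s * C + K * s ^ 2 / 2 - s * δ * C ≤ 0 := by
    by_contra h
    push_neg at h
    nlinarith [mul_pos hα h]
  linarith [hφs, h4]
end
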